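/- Let X = ℂPⁿ with v_i = p_*(z_i ∂/∂z_i) (0 ≤ i ≤ n), W = span_ℂ{v_1,…,v_n}, W^k = ∧^k W and W^0 = ℂ. For 0 ≤ k ≤ n, let S_k be the set of all I ∈ M ≅ ℤⁿ such that ⟨I, e_i⟩ = m_i ≥ −1 for all 0 ≤ i ≤ n and |I| ≤ k, and for |I| ≤ k ≤ n set V_I^k = ℂ(χ^I · 𝒱_I) ∧ W^{k−|I|}. Then the (ℂ*)ⁿ-representation on H^0(X, ∧^k 𝒯_X) induced by the torus action has weight space decomposition H^0(X, ∧^k 𝒯_X) = ⊕_{I ∈ S_k} V_I^k, where S_k is the set of all weights and V_I^k is the weight space of weight I. -/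

import Mathlib

/-!
Formalization of statements from "Poisson Cohomology of holomorphic toric Poisson
manifolds. I." (W. Hong).

Modeling conventions.  Mathlib has no holomorphic geometry of ℂPⁿ, so we use the
standard faithful algebraic model: a holomorphic multivector field on a toric variety
is determined by its restriction to the dense open torus, where (in the invariant
frame and with Laurent-monomial coefficients) multivector fields form the algebra
`MV n = AddMonoidAlgebra (ExteriorAlgebra ℂ ℂⁿ) ℤⁿ`: the element `single I ω`
represents `χ^I ⊗ ω` (`χ^I` the Laurent monomial of weight `I`, `ω` a constant
multivector in the frame `v_1, …, v_n`, `v_i = ρ(e_i)`).  Multiplication is the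
wedge product.  Similarly `AMV n` models multivector fields on ℂ^{n+1}∖{0} in the
frame `u_i = z_i ∂/∂z_i`.  Holomorphic multivector fields on ℂPⁿ are defined as the
image under `p_*` of the k-vector fields on ℂ^{n+1} with homogeneous polynomial
coefficients of degree k (this is exactly the classical description of
`H⁰(ℂPⁿ, ∧ᵏ𝒯)`, due to Bondal).  The Schouten differential `d_π = [π,·]` of a
torus-invariant bivector `π = ρ(Π)` acts weightwise by
`[π, χ^I ⊗ ω] = χ^I ⊗ (ι(ι_I Π) ∧ ω)`.
-/

noncomputable section
open Finset

namespace CPn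

variable (n : ℕ)

/-- Laurent multivector fields on the open torus (ℂ*)ⁿ ⊆ ℂPⁿ, in the invariant frame. -/
abbrev MV := AddMonoidAlgebra (ExteriorAlgebra ℂ (Fin n → ℂ)) (Fin n → ℤ)

/-- Ambient model: multivector fields on ℂ^{n+1}∖{0} with Laurent-monomial
coefficients, in the frame u_i = z_i ∂/∂z_i. -/
abbrev AMV := AddMonoidAlgebra (ExteriorAlgebra ℂ (Fin (n+1) → ℂ)) (Fin (n+1) → ℤ)

/-- The Laurent monomial χ^I as a multivector field (of degree 0). -/
def χ (I : Fin n → ℤ) : MV n := AddMonoidAlgebra.single I 1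

/-- The vectors e_0 = −(e_1+⋯+e_n), e_1, …, e_n in N_ℂ = ℂⁿ. -/
def EE : Fin (n+1) → (Fin n → ℂ) :=
  Fin.cases (fun _ => -1) (fun j => Pi.single j 1)

/-- The holomorphic vector fields v_i = ρ(e_i) = p_*(z_i ∂/∂z_i), 0 ≤ i ≤ n. -/
def v (i : Fin (n+1)) : MV n :=
  AddMonoidAlgebra.single 0 (ExteriorAlgebra.ι ℂ (EE n i))

/-- W = span_ℂ{v_1,…,v_n} = ρ(N_ℂ). -/
def W : Submodule ℂ (MV n) :=
  Submodule.span ℂ {x | ∃ i : Fin (n+1), i ≠ 0 ∧ x = v n i}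

/-- Extension of a weight I ∈ M ≅ ℤⁿ to (m_0, m_1, …, m_n), m_0 = −Σᵢ m_i, m_i = ⟨I,e_i⟩. -/
def mext (I : Fin n → ℤ) : Fin (n+1) → ℤ :=
  Fin.cases (-(∑ j, I j)) I

/-- The set of indices 0 ≤ i ≤ n with m_i = −1. -/
def deg1Set (I : Fin n → ℤ) : Finset (Fin (n+1)) :=
  univ.filter fun i => mext n I i = -1

/-- |I| = number of entries of (m_0,…,m_n) equal to −1. -/
def wt (I : Fin n → ℤ) : ℕ := (deg1Set n I).card

/-- 𝒱_I = v_{i_1} ∧ ⋯ ∧ v_{i_l}, where m_{i_1},…,m_{i_l} are the entries equal to −1. -/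
def VI (I : Fin n → ℤ) : MV n :=
  (((deg1Set n I).sort (· ≤ ·)).map (v n)).prod

/-- χ^I · 𝒱_I. -/
def chiVI (I : Fin n → ℤ) : MV n := χ n I * VI n I

/-- ℰ_I = e_{i_1} ∧ ⋯ ∧ e_{i_l} ∈ ∧^l N_ℂ (inside the exterior algebra of N_ℂ). -/
def EI (I : Fin n → ℤ) : ExteriorAlgebra ℂ (Fin n → ℂ) :=
  (((deg1Set n I).sort (· ≤ ·)).map fun i => ExteriorAlgebra.ι ℂ (EE n i)).prod

/-- V_I^k = ℂ(χ^I·𝒱_I) ∧ W^{k−|I|}. -/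
def VIk (I : Fin n → ℤ) (k : ℕ) : Submodule ℂ (MV n) :=
  Submodule.span ℂ {chiVI n I} * (W n) ^ (k - wt n I)

/-- u_i = z_i ∂/∂z_i on ℂ^{n+1}. -/
def uu (i : Fin (n+1)) : AMV n :=
  AddMonoidAlgebra.single 0 (ExteriorAlgebra.ι ℂ (Pi.single i 1))

/-- The Euler vector field e⃗ = Σ_i z_i ∂/∂z_i. -/
def eulerA : AMV n := ∑ i, uu n i

/-- The derivative of p : ℂ^{n+1}∖{0} → ℂPⁿ on the invariant frame:
the frame vector of u_i is sent to e_i (so e_0 = −Σ e_j); in coordinates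
w ↦ (w_j − w_0)_{1≤j≤n}. -/
def q : (Fin (n+1) → ℂ) →ₗ[ℂ] (Fin n → ℂ) :=
  LinearMap.pi fun j =>
    (LinearMap.proj j.succ : (Fin (n+1) → ℂ) →ₗ[ℂ] ℂ) -
      (LinearMap.proj (0 : Fin (n+1)) : (Fin (n+1) → ℂ) →ₗ[ℂ] ℂ)

/-- Pushforward p_* along p : ℂ^{n+1}∖{0} → ℂPⁿ (on torus-invariant fields, i.e.
those of weight a with Σ a = 0, this is the honest pushforward; the weight a
corresponds to the monomial of weight (a_1,…,a_n) in the coordinates t_j = z_j/z_0). -/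
def pstar : AMV n →ₗ[ℂ] MV n :=
  (Finsupp.lsum ℂ fun a =>
    (AddMonoidAlgebra.lsingle (fun j : Fin n => a j.succ) :
        ExteriorAlgebra ℂ (Fin n → ℂ) →ₗ[ℂ] MV n) ∘ₗ
      (ExteriorAlgebra.map (q n)).toLinearMap : ((Fin (n+1) → ℤ) →₀ ExteriorAlgebra ℂ (Fin (n+1) → ℂ)) →ₗ[ℂ] MV n) ∘ₗ
    (AddMonoidAlgebra.coeffLinearEquiv ℂ : AMV n ≃ₗ[ℂ] _).toLinearMap

/-- u_{i_1} ∧ ⋯ ∧ u_{i_k} for T = {i_1 < ⋯ < i_k} (constant-coefficient part). -/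
def wedgeT (T : Finset (Fin (n+1))) : ExteriorAlgebra ℂ (Fin (n+1) → ℂ) :=
  ((T.sort (· ≤ ·)).map fun i => ExteriorAlgebra.ι ℂ (Pi.single i 1)).prod

/-- F̃_k: the k-vector fields on ℂ^{n+1} whose coefficients in the frame
∂_{i_1}∧⋯∧∂_{i_k} are homogeneous polynomials of degree k, restricted to the torus
(z^b ∂_T = z^{b−ε_T} u_T). -/
def Ftilde (k : ℕ) : Submodule ℂ (AMV n) :=
  Submodule.span ℂ
    { x | ∃ (b : Fin (n+1) → ℕ) (T : Finset (Fin (n+1))), T.card = k ∧ (∑ i, b i) = k ∧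
        x = AddMonoidAlgebra.single (fun i => (b i : ℤ) - (if i ∈ T then 1 else 0)) (wedgeT n T) }

/-- H⁰(ℂPⁿ, ∧ᵏ𝒯) = p_*(F̃_k): holomorphic k-vector fields on ℂPⁿ. -/
def H0 (k : ℕ) : Submodule ℂ (MV n) := Submodule.map (pstar n) (Ftilde n k)

/-- ι_I Π ∈ N_ℂ for Π = Σ_{i<j} a i j · e_i∧e_j, where
ι_I (e_i∧e_j) = ⟨I,e_i⟩e_j − ⟨I,e_j⟩e_i. -/
def contr (a : Fin n → Fin n → ℂ) (I : Fin n → ℤ) : Fin n → ℂ := fun j =>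
  ∑ p ∈ univ.filter (fun p : Fin n × Fin n => p.1 < p.2),
    a p.1 p.2 * ((I p.1 : ℂ) * (if p.2 = j then 1 else 0) -
      (I p.2 : ℂ) * (if p.1 = j then 1 else 0))

/-- The toric bivector field π = Σ_{1≤i<j≤n} a i j · v_i ∧ v_j. -/
def piT (a : Fin n → Fin n → ℂ) : MV n :=
  ∑ p ∈ univ.filter (fun p : Fin n × Fin n => p.1 < p.2),
    a p.1 p.2 • (v n p.1.succ * v n p.2.succ)

/-- The Poisson differential d_π = [π, ·] (Schouten bracket with π = ρ(Π)):
on the toric frame it is given weightwise by [π, χ^I ⊗ ω] = χ^I ⊗ (ι(ι_I Π) ∧ ω). -/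
def dPi (a : Fin n → Fin n → ℂ) : MV n →ₗ[ℂ] MV n :=
  (Finsupp.lsum ℂ fun I =>
    (AddMonoidAlgebra.lsingle I : ExteriorAlgebra ℂ (Fin n → ℂ) →ₗ[ℂ] MV n) ∘ₗ
      LinearMap.mulLeft ℂ (ExteriorAlgebra.ι ℂ (contr n a I)) : ((Fin n → ℤ) →₀ ExteriorAlgebra ℂ (Fin n → ℂ)) →ₗ[ℂ] MV n) ∘ₗ
    (AddMonoidAlgebra.coeffLinearEquiv ℂ : MV n ≃ₗ[ℂ] _).toLinearMap

/-- S_k : weights I with all m_i ≥ −1 (0 ≤ i ≤ n) and |I| ≤ k. -/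
def Sk (k : ℕ) : Set (Fin n → ℤ) := {I | (∀ i, -1 ≤ mext n I i) ∧ wt n I ≤ k}

/-- S(k) : weights I with all m_i ≥ −1 (0 ≤ i ≤ n) and |I| = k. -/
def Slevel (k : ℕ) : Set (Fin n → ℤ) := {I | (∀ i, -1 ≤ mext n I i) ∧ wt n I = k}

/-- S_k(π) : I ∈ S_k satisfying (ι_I Π) ∧ ℰ_I = 0. -/
def SkPi (a : Fin n → Fin n → ℂ) (k : ℕ) : Set (Fin n → ℤ) :=
  {I | I ∈ Sk n k ∧ ExteriorAlgebra.ι ℂ (contr n a I) * EI n I = 0}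

/-- S(k,π) : I with |I| = k, all m_i ≥ −1, satisfying (ι_I Π) ∧ ℰ_I = 0. -/
def SlevelPi (a : Fin n → Fin n → ℂ) (k : ℕ) : Set (Fin n → ℤ) :=
  {I | I ∈ Slevel n k ∧ ExteriorAlgebra.ι ℂ (contr n a I) * EI n I = 0}

/-- Poisson cocycles in degree k: holomorphic k-vector fields killed by d_π. -/
def cocycles (a : Fin n → Fin n → ℂ) (k : ℕ) : Submodule ℂ (MV n) :=
  H0 n k ⊓ LinearMap.ker (dPi n a)

/-- Poisson coboundaries in degree k: d_π of the holomorphic (k−1)-vector fields. -/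
def cobound (a : Fin n → Fin n → ℂ) : ℕ → Submodule ℂ (MV n)
  | 0 => ⊥
  | (k+1) => Submodule.map (dPi n a) (H0 n k)

/-- The coefficient matrix of the standard Poisson structure π_st = Σ_{1≤i<j≤n} v_i∧v_j. -/
def aST : Fin n → Fin n → ℂ := fun _ _ => 1

/-- The action of the torus element t ∈ (ℂ*)ⁿ on multivector fields:
t acts on the weight-I component by the character t^I. -/
def act (t : Fin n → ℂˣ) : MV n →ₗ[ℂ] MV n :=
  (Finsupp.lsum ℂ fun I =>
    (∏ j, (t j : ℂ) ^ (I j)) •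
      (AddMonoidAlgebra.lsingle I : ExteriorAlgebra ℂ (Fin n → ℂ) →ₗ[ℂ] MV n) : ((Fin n → ℤ) →₀ ExteriorAlgebra ℂ (Fin n → ℂ)) →ₗ[ℂ] MV n) ∘ₗ
    (AddMonoidAlgebra.coeffLinearEquiv ℂ : MV n ≃ₗ[ℂ] _).toLinearMap


/-! ### Auxiliary machinery for the proof -/

section Aux

open ExteriorAlgebra

/-! #### General wedge-product lemmas -/

section Wedge

variable {V : Type*} [AddCommGroup V] [Module ℂ V]

/-- The wedge product of a list of vectors, as an element of the exterior algebra. -/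
def wedge (l : List V) : ExteriorAlgebra ℂ V := (l.map (ι ℂ)).prod

lemma wedge_nil : wedge ([] : List V) = 1 := rfl

lemma wedge_cons (x : V) (l : List V) : wedge (x :: l) = ι ℂ x * wedge l := by
  simp [wedge]

lemma wedge_append (l1 l2 : List V) : wedge (l1 ++ l2) = wedge l1 * wedge l2 := by
  simp [wedge]

lemma ι_anticomm (x y : V) : ι ℂ x * ι ℂ y = -(ι ℂ y * ι ℂ x) := by
  rw [eq_neg_iff_add_eq_zero, add_comm]; exact ι_add_mul_swap y x

/-- A sign `ε` is `±1`. -/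
def IsPM (ε : ℂ) : Prop := ε = 1 ∨ ε = -1

lemma IsPM.one : IsPM 1 := Or.inl rfl

lemma IsPM.neg {ε : ℂ} (h : IsPM ε) : IsPM (-ε) := by
  rcases h with h | h <;> simp [IsPM, h]

lemma IsPM.mul {ε ε' : ℂ} (h : IsPM ε) (h' : IsPM ε') : IsPM (ε * ε') := by
  rcases h with h | h <;> rcases h' with h' | h' <;> simp [IsPM, h, h']

lemma IsPM.smul_cancel {ε : ℂ} (h : IsPM ε) {A : Type*} [AddCommGroup A] [Module ℂ A]
    {x y : A} (e : x = ε • y) : y = ε • x := by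
  rcases h with h | h <;> subst h <;> simp [e]

lemma ι_mul_wedge (x : V) (l : List V) :
    ∃ ε : ℂ, IsPM ε ∧ ι ℂ x * wedge l = ε • (wedge l * ι ℂ x) := by
  induction l with
  | nil => exact ⟨1, IsPM.one, by simp [wedge]⟩
  | cons y l ih =>
    obtain ⟨ε, hε, e⟩ := ih
    refine ⟨-ε, hε.neg, ?_⟩
    rw [wedge_cons, ← mul_assoc, ι_anticomm, neg_mul, mul_assoc, e, mul_smul_comm,
      ← mul_assoc]
    simp

lemma wedge_perm {l1 l2 : List V} (h : l1.Perm l2) :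
    ∃ ε : ℂ, IsPM ε ∧ wedge l1 = ε • wedge l2 := by
  induction h with
  | nil => exact ⟨1, IsPM.one, by simp⟩
  | cons x h ih =>
    obtain ⟨ε, hε, e⟩ := ih
    exact ⟨ε, hε, by rw [wedge_cons, wedge_cons, e, mul_smul_comm]⟩
  | swap x y l =>
    refine ⟨-1, Or.inr rfl, ?_⟩
    rw [wedge_cons, wedge_cons, wedge_cons, wedge_cons, ← mul_assoc, ← mul_assoc,
      ι_anticomm]
    simp
  | trans h1 h2 ih1 ih2 =>
    obtain ⟨ε1, hε1, e1⟩ := ih1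
    obtain ⟨ε2, hε2, e2⟩ := ih2
    exact ⟨ε1 * ε2, hε1.mul hε2, by rw [e1, e2, smul_smul]⟩

lemma wedge_eq_ιMulti (l : List V) : wedge l = ιMulti ℂ l.length l.get := by
  rw [ιMulti_apply, wedge]
  congr 1
  conv_lhs => rw [← List.ofFn_get l]
  rw [List.map_ofFn]
  rfl

lemma wedge_eq_zero_of_dup {l : List V} (h : ¬ l.Nodup) : wedge l = 0 := by
  rw [List.nodup_iff_injective_get, Function.not_injective_iff] at h
  obtain ⟨i, j, hij, hne⟩ := h
  rw [wedge_eq_ιMulti]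
  exact AlternatingMap.map_eq_zero_of_eq _ _ hij (by simpa using hne)

lemma ιMulti_ne_zero {k : ℕ} (w : Fin k → V) (hw : LinearIndependent ℂ w) :
    ιMulti ℂ k w ≠ 0 := by
  classical
  set f : (Fin k → ℂ) →ₗ[ℂ] V :=
    LinearMap.lsum ℂ (fun _ => ℂ) ℕ fun i => LinearMap.id.smulRight (w i) with hf
  have hker : LinearMap.ker f = ⊥ := Fintype.linearIndependent_iff'.1 hw
  obtain ⟨L, hL⟩ := f.exists_leftInverse_of_injective hker
  have hfs : ∀ i, f (Pi.single i 1) = w i := by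
    intro i
    simp [hf, LinearMap.lsum_apply, Pi.single_apply, ite_smul]
  have hLw : ∀ i, L (w i) = Pi.single i 1 := by
    intro i
    rw [← hfs i, ← LinearMap.comp_apply, hL, LinearMap.id_apply]
  intro h0
  set φ : V [⋀^Fin k]→ₗ[ℂ] ℂ := (Matrix.detRowAlternating).compLinearMap L with hφ
  set F : ∀ i, V [⋀^Fin i]→ₗ[ℂ] ℂ := Function.update (fun _ => 0) k φ with hF
  have h1 : liftAlternating (R := ℂ) F (ιMulti ℂ k w) = φ w := by
    rw [liftAlternating_apply_ιMulti, hF, Function.update_self]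
  have h2 : φ w = 1 := by
    rw [hφ, AlternatingMap.compLinearMap_apply, Matrix.detRowAlternating,
      AlternatingMap.coe_mk]
    show Matrix.det (Matrix.of fun i => L (w i)) = 1
    rw [show (Matrix.of fun i => L (w i)) = 1 from by
      ext i j
      simp [hLw i, Matrix.one_apply, Pi.single_apply, eq_comm], Matrix.det_one]
  rw [h0, map_zero] at h1
  rw [h2] at h1
  exact one_ne_zero h1.symm

lemma wedge_ne_zero {l : List V}
    (h : LinearIndependent ℂ (fun i : Fin l.length => l.get i)) : wedge l ≠ 0 := by
  rw [wedge_eq_ιMulti]; exact ιMulti_ne_zero _ h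

end Wedge

/-! #### The vectors `EE` -/

lemma EE_zero : EE n 0 = fun _ => -1 := rfl

lemma EE_succ (j : Fin n) : EE n j.succ = Pi.single j 1 := by
  simp [EE]

lemma q_single (i : Fin (n+1)) : q n (Pi.single i 1) = EE n i := by
  funext j
  have h1 : q n (Pi.single i 1) j = (Pi.single i 1 : Fin (n+1) → ℂ) j.succ - (Pi.single i 1 : Fin (n+1) → ℂ) 0 := by
    simp [q]
  rw [h1]
  induction i using Fin.cases with
  | zero =>
    rw [EE_zero]
    simp [Pi.single_apply, (Fin.succ_ne_zero j)]
  | succ s =>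
    rw [EE_succ]
    simp [Pi.single_apply, Fin.succ_inj, (Fin.succ_ne_zero s).symm]

lemma EE_indep {m : ℕ} (g : Fin m → Fin (n+1)) (hg : Function.Injective g) (hm : m ≤ n) :
    LinearIndependent ℂ (fun i => EE n (g i)) := by
  obtain ⟨i₁, hi₁⟩ : ∃ i₁, ∀ i, g i ≠ i₁ := by
    by_contra hc
    push_neg at hc
    have hs : Function.Surjective g := fun b => by
      obtain ⟨i, hi⟩ := hc b; exact ⟨i, hi⟩
    have := Fintype.card_le_of_surjective g hs
    simp only [Fintype.card_fin] at this
    omega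
  have base : LinearIndependent ℂ (fun i : Fin m => (Pi.single (g i) 1 : Fin (n+1) → ℂ)) := by
    have h2 := (Pi.basisFun ℂ (Fin (n+1))).linearIndependent.comp g hg
    have he : (fun i : Fin m => (Pi.single (g i) 1 : Fin (n+1) → ℂ))
        = (Pi.basisFun ℂ (Fin (n+1))) ∘ g := by
      funext i; simp [Pi.basisFun_apply]
    rwa [he]
  have hdisj : Disjoint
      (Submodule.span ℂ (Set.range fun i : Fin m => (Pi.single (g i) 1 : Fin (n+1) → ℂ)))
      (LinearMap.ker (q n)) := by
    rw [Submodule.disjoint_def]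
    intro x hx hker
    have hconst : ∀ j : Fin n, x j.succ = x 0 := by
      intro j
      have h0 : q n x = 0 := hker
      have h1 := congr_fun h0 j
      simp only [q, LinearMap.pi_apply, LinearMap.sub_apply, LinearMap.proj_apply,
        Pi.zero_apply] at h1
      exact sub_eq_zero.mp h1
    have hx1 : x i₁ = 0 := by
      have hle : Submodule.span ℂ
          (Set.range fun i : Fin m => (Pi.single (g i) 1 : Fin (n+1) → ℂ))
          ≤ LinearMap.ker (LinearMap.proj (R := ℂ) (φ := fun _ : Fin (n+1) => ℂ) i₁) := by
        rw [Submodule.span_le]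
        rintro _ ⟨i, rfl⟩
        simp [LinearMap.mem_ker, Pi.single_apply, Ne.symm (hi₁ i)]
      simpa using hle hx
    have h00 : x 0 = 0 := by
      rcases Fin.eq_zero_or_eq_succ i₁ with h | ⟨j, h⟩
      · rwa [h] at hx1
      · rw [h] at hx1
        exact (hconst j).symm.trans hx1
    funext i
    rcases Fin.eq_zero_or_eq_succ i with rfl | ⟨j, rfl⟩
    · exact h00
    · exact (hconst j).trans h00
  have hmap := base.map (f := q n) hdisj
  have he2 : (q n ∘ fun i : Fin m => (Pi.single (g i) 1 : Fin (n+1) → ℂ))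
      = fun i => EE n (g i) := by
    funext i; simp only [Function.comp_apply]; rw [q_single]
  rwa [he2] at hmap

end Aux

section Aux2

open ExteriorAlgebra

variable (n : ℕ)

/-- The wedge of the `EE`-vectors indexed by a finset. -/
def ωE (T : Finset (Fin (n+1))) : ExteriorAlgebra ℂ (Fin n → ℂ) :=
  wedge ((T.sort (· ≤ ·)).map (EE n))

lemma EI_eq (I : Fin n → ℤ) : EI n I = ωE n (deg1Set n I) := by
  rw [EI, ωE, wedge, List.map_map]; rfl

lemma ωE_insert {a : Fin (n+1)} {T : Finset (Fin (n+1))} (h : a ∉ T) :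
    ∃ ε : ℂ, IsPM ε ∧ ωE n (insert a T) = ε • (ι ℂ (EE n a) * ωE n T) := by
  have hperm : ((insert a T).sort (· ≤ ·)).Perm (a :: T.sort (· ≤ ·)) :=
    ((Finset.sort_perm_toList _ _).trans (Finset.toList_insert h)).trans
      ((Finset.sort_perm_toList _ _).symm.cons a)
  obtain ⟨ε, hε, e⟩ := wedge_perm (hperm.map (EE n))
  refine ⟨ε, hε, ?_⟩
  rw [ωE, e, List.map_cons, wedge_cons, ωE]

lemma ωE_mul_ι_of_mem (T : Finset (Fin (n+1))) {j : Fin n} (h : j.succ ∈ T) :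
    ωE n T * ι ℂ (EE n j.succ) = 0 := by
  have he : ωE n T * ι ℂ (EE n j.succ)
      = wedge (((T.sort (· ≤ ·)).map (EE n)) ++ [EE n j.succ]) := by
    rw [wedge_append, ωE]
    simp [wedge_cons, wedge_nil]
  rw [he]
  apply wedge_eq_zero_of_dup
  intro hnd
  rw [List.nodup_append] at hnd
  exact hnd.2.2 _ (List.mem_map_of_mem ((Finset.mem_sort _).2 h)) _
    (List.mem_singleton_self _) rfl

lemma ωE_ne_zero {T : Finset (Fin (n+1))} (hT : T.card ≤ n) : ωE n T ≠ 0 := by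
  apply wedge_ne_zero
  set l := T.sort (· ≤ ·) with hl
  have hlen : (l.map (EE n)).length = l.length := List.length_map _
  have hinj : Function.Injective fun i : Fin (l.map (EE n)).length => l.get (Fin.cast hlen i) := by
    intro a b hab
    have h2 : (Fin.cast hlen a) = (Fin.cast hlen b) :=
      (List.nodup_iff_injective_get.1 (T.sort_nodup _)) hab
    simpa [Fin.ext_iff] using h2
  have hfam : (fun i : Fin (l.map (EE n)).length => (l.map (EE n)).get i)
      = fun i => EE n (l.get (Fin.cast hlen i)) := by
    funext i
    rw [List.get_eq_getElem, List.get_eq_getElem, List.getElem_map]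
    rfl
  rw [hfam]
  apply EE_indep n _ hinj
  rw [hlen, hl, Finset.length_sort]
  exact hT

/-- Degree-one part of the exterior algebra. -/
def Λ1 : Submodule ℂ (ExteriorAlgebra ℂ (Fin n → ℂ)) := LinearMap.range (ι ℂ)

lemma ι_eq_sum (w : Fin n → ℂ) :
    (ι ℂ w : ExteriorAlgebra ℂ (Fin n → ℂ)) = ∑ j, w j • ι ℂ (EE n j.succ) := by
  have hw : w = ∑ j, w j • (Pi.single j 1 : Fin n → ℂ) := by
    funext x
    simp [Pi.single_apply]
  conv_lhs => rw [hw]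
  rw [map_sum]
  congr 1
  funext j
  rw [map_smul, EE_succ]

lemma ωE_union_mem (D S : Finset (Fin (n+1))) (hDS : Disjoint D S) :
    ωE n (D ∪ S) ∈ Submodule.span ℂ {ωE n D} * Λ1 n ^ S.card := by
  classical
  revert hDS
  induction S using Finset.induction_on with
  | empty =>
    intro _
    rw [Finset.union_empty, Finset.card_empty, pow_zero, mul_one]
    exact Submodule.subset_span rfl
  | @insert a S ha ih =>
    intro hDS
    rw [Finset.disjoint_insert_right] at hDS
    have haDS : a ∉ D ∪ S := by simp [hDS.1, ha]
    rw [Finset.union_insert]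
    obtain ⟨ε, hε, e⟩ := ωE_insert n haDS
    obtain ⟨ε', hε', e'⟩ := ι_mul_wedge (EE n a) (((D ∪ S).sort (· ≤ ·)).map (EE n))
    have e'' : ι ℂ (EE n a) * ωE n (D ∪ S) = ε' • (ωE n (D ∪ S) * ι ℂ (EE n a)) := e'
    rw [e, e'', smul_smul]
    apply Submodule.smul_mem
    rw [Finset.card_insert_of_notMem ha, pow_succ, ← mul_assoc]
    exact Submodule.mul_mem_mul (ih hDS.2) ⟨EE n a, rfl⟩

lemma span_ωE_mul_le (D : Finset (Fin (n+1))) (p : ℕ) :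
    Submodule.span ℂ {ωE n D} * Λ1 n ^ p
      ≤ Submodule.span ℂ
          {x | ∃ T : Finset (Fin (n+1)), T.card = D.card + p ∧ D ⊆ T ∧ x = ωE n T} := by
  induction p with
  | zero =>
    rw [pow_zero, mul_one]
    apply Submodule.span_mono
    intro x hx
    rw [Set.mem_singleton_iff] at hx
    exact ⟨D, by simp, Finset.Subset.refl D, hx⟩
  | succ p ih =>
    rw [pow_succ, ← mul_assoc]
    refine le_trans (mul_le_mul' ih le_rfl) ?_
    rw [Submodule.mul_le]
    intro x hx y hy
    induction hx using Submodule.span_induction with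
    | mem g hg =>
      obtain ⟨T, hTc, hDT, rfl⟩ := hg
      obtain ⟨w, rfl⟩ := hy
      rw [ι_eq_sum, Finset.mul_sum]
      apply Submodule.sum_mem
      intro j _
      rw [mul_smul_comm]
      apply Submodule.smul_mem
      by_cases hj : j.succ ∈ T
      · rw [ωE_mul_ι_of_mem n T hj]
        exact Submodule.zero_mem _
      · obtain ⟨ε, hε, e⟩ := ωE_insert n hj
        obtain ⟨ε', hε', e'⟩ := ι_mul_wedge (EE n j.succ) ((T.sort (· ≤ ·)).map (EE n))
        have e'' : ι ℂ (EE n j.succ) * ωE n T = ε' • (ωE n T * ι ℂ (EE n j.succ)) := e'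
        have e2 : ωE n (insert j.succ T) = (ε * ε') • (ωE n T * ι ℂ (EE n j.succ)) := by
          rw [e, e'', smul_smul]
        have e3 := (hε.mul hε').smul_cancel e2
        rw [e3]
        apply Submodule.smul_mem
        apply Submodule.subset_span
        exact ⟨insert j.succ T, by rw [Finset.card_insert_of_notMem hj, hTc]; omega,
          hDT.trans (Finset.subset_insert _ _), rfl⟩
    | zero => rw [zero_mul]; exact Submodule.zero_mem _
    | add x₁ x₂ hx₁ hx₂ ih₁ ih₂ => rw [add_mul]; exact Submodule.add_mem _ ih₁ ih₂
    | smul c x₁ hx₁ ih₁ => rw [smul_mul_assoc]; exact Submodule.smul_mem _ _ ih₁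

lemma span_ωE_eq (D : Finset (Fin (n+1))) (k : ℕ) (hD : D.card ≤ k) :
    Submodule.span ℂ {x | ∃ T : Finset (Fin (n+1)), T.card = k ∧ D ⊆ T ∧ x = ωE n T}
      = Submodule.span ℂ {ωE n D} * Λ1 n ^ (k - D.card) := by
  apply le_antisymm
  · rw [Submodule.span_le]
    rintro x ⟨T, hTk, hDT, rfl⟩
    have h1 := ωE_union_mem n D (T \ D) Finset.disjoint_sdiff
    rw [Finset.union_sdiff_of_subset hDT, Finset.card_sdiff_of_subset hDT, hTk] at h1
    exact h1
  · have h2 := span_ωE_mul_le n D (k - D.card)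
    rwa [show D.card + (k - D.card) = k from by omega] at h2

end Aux2

section Aux3

open ExteriorAlgebra

variable (n : ℕ)

/-- `Finsupp.lsingle` with the correct (algebra) target type. -/
def Lsi (c : Fin n → ℤ) : ExteriorAlgebra ℂ (Fin n → ℂ) →ₗ[ℂ] MV n :=
  AddMonoidAlgebra.lsingle c

lemma Lsi_apply (c : Fin n → ℤ) (x : ExteriorAlgebra ℂ (Fin n → ℂ)) :
    Lsi n c x = AddMonoidAlgebra.single c x := rfl

lemma MV.single_mul_single (a b : Fin n → ℤ) (x y : ExteriorAlgebra ℂ (Fin n → ℂ)) :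
    Lsi n a x * Lsi n b y = Lsi n (a + b) (x * y) :=
  AddMonoidAlgebra.single_mul_single _ _ _ _

lemma MV.one_def : (1 : MV n) = AddMonoidAlgebra.single 0 1 :=
  AddMonoidAlgebra.one_def

lemma map_lsingle_mul (c d : Fin n → ℤ)
    (X Y : Submodule ℂ (ExteriorAlgebra ℂ (Fin n → ℂ))) :
    Submodule.map (Lsi n c) X * Submodule.map (Lsi n d) Y
      = Submodule.map (Lsi n (c + d)) (X * Y) := by
  apply le_antisymm
  · rw [Submodule.mul_le]
    rintro _ ⟨x, hx, rfl⟩ _ ⟨y, hy, rfl⟩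
    exact ⟨x * y, Submodule.mul_mem_mul hx hy, (MV.single_mul_single n c d x y).symm⟩
  · rw [Submodule.map_le_iff_le_comap, Submodule.mul_le]
    intro x hx y hy
    simp only [Submodule.mem_comap]
    rw [show Lsi n (c + d) (x * y) = Lsi n c x * Lsi n d y
      from (MV.single_mul_single n c d x y).symm]
    exact Submodule.mul_mem_mul (Submodule.mem_map_of_mem hx) (Submodule.mem_map_of_mem hy)

lemma VI_single (I : Fin n → ℤ) : VI n I = AddMonoidAlgebra.single 0 (EI n I) := by
  rw [VI, EI]
  generalize (deg1Set n I).sort (· ≤ ·) = l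
  induction l with
  | nil =>
    simp only [List.map_nil, List.prod_nil]
    exact MV.one_def n
  | cons i l ih =>
    rw [List.map_cons, List.map_cons, List.prod_cons, List.prod_cons, ih, v,
      AddMonoidAlgebra.single_mul_single, zero_add]

lemma chiVI_single (I : Fin n → ℤ) : chiVI n I = AddMonoidAlgebra.single I (EI n I) := by
  rw [chiVI, χ, VI_single, AddMonoidAlgebra.single_mul_single, add_zero, one_mul]

lemma span_single_eq (c : Fin n → ℤ) (e : ExteriorAlgebra ℂ (Fin n → ℂ)) :
    Submodule.span ℂ ({AddMonoidAlgebra.single c e} : Set (MV n))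
      = Submodule.map (Lsi n c) (Submodule.span ℂ {e}) := by
  rw [Submodule.map_span, Set.image_singleton]
  rfl

lemma W_eq : W n = Submodule.map (Lsi n 0) (Λ1 n) := by
  apply le_antisymm
  · rw [W, Submodule.span_le]
    rintro x ⟨i, hi, rfl⟩
    exact ⟨ι ℂ (EE n i), ⟨EE n i, rfl⟩, by rw [Lsi_apply, v]⟩
  · intro x hx
    obtain ⟨y, hy, rfl⟩ := hx
    obtain ⟨w, rfl⟩ := hy
    have hs : Lsi n 0 (ι ℂ w) = ∑ j, w j • Lsi n 0 (ι ℂ (EE n j.succ)) := by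
      rw [ι_eq_sum n w, map_sum]
      congr 1
      funext j
      rw [map_smul]
    rw [hs]
    apply Submodule.sum_mem
    intro j _
    apply Submodule.smul_mem
    apply Submodule.subset_span
    exact ⟨j.succ, Fin.succ_ne_zero j, by rw [Lsi_apply, v]⟩

lemma W_pow (p : ℕ) : (W n) ^ p = Submodule.map (Lsi n 0) (Λ1 n ^ p) := by
  induction p with
  | zero =>
    rw [pow_zero, pow_zero, Submodule.one_eq_span, Submodule.one_eq_span, Submodule.map_span,
      Set.image_singleton]
    congr 1
  | succ p ih => rw [pow_succ, pow_succ, ih, W_eq, map_lsingle_mul, zero_add]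

lemma VIk_eq (I : Fin n → ℤ) (k : ℕ) :
    VIk n I k = Submodule.map (Lsi n I)
      (Submodule.span ℂ {EI n I} * Λ1 n ^ (k - wt n I)) := by
  rw [VIk, chiVI_single n I, span_single_eq, W_pow n (k - wt n I), map_lsingle_mul, add_zero]

end Aux3

section Aux4

open ExteriorAlgebra

variable (n : ℕ)

/-- The weight space of weight `I`. -/
def wsp (I : Fin n → ℤ) : Submodule ℂ (MV n) :=
  ⨅ t : Fin n → ℂˣ, LinearMap.ker
    (act n t - (∏ j, (t j : ℂ) ^ (I j)) • (LinearMap.id : MV n →ₗ[ℂ] MV n))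

lemma act_single (t : Fin n → ℂˣ) (J : Fin n → ℤ) (ω : ExteriorAlgebra ℂ (Fin n → ℂ)) :
    act n t (AddMonoidAlgebra.single J ω)
      = (∏ j, (t j : ℂ) ^ (J j)) • (AddMonoidAlgebra.single J ω : MV n) := by
  rw [act, LinearMap.comp_apply]
  erw [Finsupp.lsum_single]
  rfl

lemma act_coeff (t : Fin n → ℂˣ) (x : MV n) (J : Fin n → ℤ) :
    (act n t x).coeff J = (∏ j, (t j : ℂ) ^ (J j)) • x.coeff J := by
  induction x using AddMonoidAlgebra.induction_linear with
  | zero => simp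
  | add f g hf hg => rw [map_add, AddMonoidAlgebra.coeff_add, Finsupp.add_apply, hf, hg,
      AddMonoidAlgebra.coeff_add, Finsupp.add_apply, smul_add]
  | single K ω =>
    rw [act_single, AddMonoidAlgebra.coeff_smul, Finsupp.smul_apply]
    by_cases h : K = J
    · subst h; rfl
    · simp [Finsupp.single_eq_of_ne' h]

lemma mem_wsp (I : Fin n → ℤ) (x : MV n) :
    x ∈ wsp n I ↔ ∀ t : Fin n → ℂˣ, act n t x = (∏ j, (t j : ℂ) ^ (I j)) • x := by
  simp [wsp, Submodule.mem_iInf, LinearMap.mem_ker, LinearMap.sub_apply, sub_eq_zero,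
    LinearMap.smul_apply]

lemma wsp_eq (I : Fin n → ℤ) : wsp n I = LinearMap.range (Lsi n I) := by
  apply le_antisymm
  · intro x hx
    rw [mem_wsp] at hx
    have hx0 : ∀ J, J ≠ I → x.coeff J = 0 := by
      intro J hJ
      obtain ⟨j₀, hj₀⟩ : ∃ j₀, J j₀ ≠ I j₀ := by
        by_contra hc; push_neg at hc; exact hJ (funext hc)
      set t : Fin n → ℂˣ :=
        (fun j => if j = j₀ then Units.mk0 (2:ℂ) (by norm_num) else 1) with ht
      have h1 := congrArg (fun y : MV n => y.coeff J) (hx t)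
      rw [act_coeff, AddMonoidAlgebra.coeff_smul, Finsupp.smul_apply] at h1
      have hcJ : (∏ j, ((t j : ℂ)) ^ (J j)) = (2:ℂ) ^ (J j₀) := by
        rw [Finset.prod_eq_single j₀]
        · simp [ht]
        · intro b _ hb; simp [ht, hb]
        · simp
      have hcI : (∏ j, ((t j : ℂ)) ^ (I j)) = (2:ℂ) ^ (I j₀) := by
        rw [Finset.prod_eq_single j₀]
        · simp [ht]
        · intro b _ hb; simp [ht, hb]
        · simp
      rw [hcJ, hcI] at h1
      have h2 : ((2:ℂ) ^ (J j₀) - (2:ℂ) ^ (I j₀)) • x.coeff J = 0 := by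
        rw [sub_smul, h1, sub_self]
      rcases smul_eq_zero.1 h2 with h | h
      · exfalso
        apply hj₀
        have h3 : ((2:ℂ)) ^ (J j₀) = 2 ^ (I j₀) := sub_eq_zero.mp h
        have h4 : ((2:ℝ)) ^ (J j₀) = (2:ℝ) ^ (I j₀) := by
          have h5 := congrArg (fun z : ℂ => ‖z‖) h3
          simpa [norm_zpow] using h5
        exact zpow_right_injective₀ (by norm_num) (by norm_num) h4
      · exact h
    refine ⟨x.coeff I, ?_⟩
    ext J
    rw [Lsi_apply, AddMonoidAlgebra.coeff_single]
    by_cases h : J = I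
    · subst h; rw [Finsupp.single_eq_same]
    · rw [Finsupp.single_eq_of_ne' (Ne.symm h), hx0 J h]
  · rintro _ ⟨ω, rfl⟩
    rw [mem_wsp]
    intro t
    rw [Lsi_apply, act_single]

end Aux4

section Aux5

open ExteriorAlgebra

variable (n : ℕ)

/-- The weight on the quotient torus associated to data `(b, T)`. -/
def Jw (b : Fin (n+1) → ℕ) (T : Finset (Fin (n+1))) : Fin n → ℤ :=
  fun j => (b j.succ : ℤ) - (if j.succ ∈ T then 1 else 0)

lemma pstar_single (c : Fin (n+1) → ℤ) (ω : ExteriorAlgebra ℂ (Fin (n+1) → ℂ)) :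
    pstar n (AddMonoidAlgebra.single c ω)
      = AddMonoidAlgebra.single (fun j => c j.succ) (ExteriorAlgebra.map (q n) ω) := by
  rw [pstar, LinearMap.comp_apply]
  erw [Finsupp.lsum_single]
  rfl

lemma map_q_wedgeT (T : Finset (Fin (n+1))) :
    ExteriorAlgebra.map (q n) (wedgeT n T) = ωE n T := by
  rw [wedgeT, ωE, wedge, map_list_prod, List.map_map, List.map_map]
  congr 2
  funext i
  simp only [Function.comp_apply]
  rw [ExteriorAlgebra.map_apply_ι, q_single]

lemma H0_eq_span (k : ℕ) : H0 n k = Submodule.span ℂ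
    {x : MV n | ∃ (b : Fin (n+1) → ℕ) (T : Finset (Fin (n+1))),
      T.card = k ∧ (∑ i, b i) = k ∧ x = AddMonoidAlgebra.single (Jw n b T) (ωE n T)} := by
  rw [H0, Ftilde, Submodule.map_span]
  congr 1
  ext x
  constructor
  · rintro ⟨_, ⟨b, T, h1, h2, rfl⟩, rfl⟩
    exact ⟨b, T, h1, h2, by rw [pstar_single, map_q_wedgeT]; rfl⟩
  · rintro ⟨b, T, h1, h2, rfl⟩
    exact ⟨_, ⟨b, T, h1, h2, rfl⟩, by rw [pstar_single, map_q_wedgeT]; rfl⟩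

lemma mext_succ (I : Fin n → ℤ) (j : Fin n) : mext n I j.succ = I j := by
  simp [mext]

lemma mext_zero (I : Fin n → ℤ) : mext n I 0 = -(∑ j, I j) := by
  simp [mext]

lemma sum_boole_mem (T : Finset (Fin (n+1))) :
    (∑ i, if i ∈ T then (1:ℤ) else 0) = T.card := by
  rw [Finset.sum_ite_mem, Finset.univ_inter, Finset.sum_const]
  simp

lemma sum_mext (I : Fin n → ℤ) : ∑ i, mext n I i = 0 := by
  rw [Fin.sum_univ_succ, mext_zero]
  simp [mext_succ]

lemma mext_Jw (b : Fin (n+1) → ℕ) (T : Finset (Fin (n+1))) (k : ℕ)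
    (hb : (∑ i, b i) = k) (hT : T.card = k) (i : Fin (n+1)) :
    mext n (Jw n b T) i = (b i : ℤ) - (if i ∈ T then 1 else 0) := by
  rcases Fin.eq_zero_or_eq_succ i with rfl | ⟨j, rfl⟩
  · rw [mext_zero]
    have h1 : ∑ j : Fin n, Jw n b T j
        = (∑ j : Fin n, (b j.succ : ℤ)) - (∑ j : Fin n, if j.succ ∈ T then (1:ℤ) else 0) :=
      Finset.sum_sub_distrib _ _
    have h2 : (b 0 : ℤ) + ∑ j : Fin n, (b j.succ : ℤ) = (k : ℤ) := by
      rw [← Fin.sum_univ_succ (fun i => (b i : ℤ))]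
      exact_mod_cast hb
    have h3 : (if 0 ∈ T then (1:ℤ) else 0)
        + ∑ j : Fin n, (if j.succ ∈ T then (1:ℤ) else 0) = (k : ℤ) := by
      rw [← Fin.sum_univ_succ (fun i => if i ∈ T then (1:ℤ) else 0), sum_boole_mem, hT]
    rw [h1]
    linarith
  · rw [mext_succ]; rfl

lemma genWeight_mem (b : Fin (n+1) → ℕ) (T : Finset (Fin (n+1))) (k : ℕ)
    (hb : (∑ i, b i) = k) (hT : T.card = k) :
    (∀ i, -1 ≤ mext n (Jw n b T) i) ∧ deg1Set n (Jw n b T) ⊆ T := by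
  constructor
  · intro i
    rw [mext_Jw n b T k hb hT i]
    have hbi : (0:ℤ) ≤ (b i : ℤ) := Int.natCast_nonneg _
    split_ifs <;> omega
  · intro i hi
    rw [deg1Set, Finset.mem_filter] at hi
    have h2 := hi.2
    rw [mext_Jw n b T k hb hT i] at h2
    have hbi : (0:ℤ) ≤ (b i : ℤ) := Int.natCast_nonneg _
    by_contra hiT
    rw [if_neg hiT] at h2
    omega

lemma Jw_mem_Sk (b : Fin (n+1) → ℕ) (T : Finset (Fin (n+1))) (k : ℕ)
    (hb : (∑ i, b i) = k) (hT : T.card = k) : Jw n b T ∈ Sk n k := by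
  obtain ⟨h1, h2⟩ := genWeight_mem n b T k hb hT
  exact ⟨h1, le_trans (Finset.card_le_card h2) (le_of_eq hT)⟩

lemma exists_b (I : Fin n → ℤ) (hI : ∀ i, -1 ≤ mext n I i) (T : Finset (Fin (n+1))) (k : ℕ)
    (hT : T.card = k) (hDT : deg1Set n I ⊆ T) :
    ∃ b : Fin (n+1) → ℕ, (∑ i, b i) = k ∧ Jw n b T = I := by
  refine ⟨fun i => (mext n I i + if i ∈ T then 1 else 0).toNat, ?_, ?_⟩
  · have hcoe : ∀ i, (((mext n I i + if i ∈ T then 1 else 0).toNat : ℤ))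
        = mext n I i + (if i ∈ T then 1 else 0) := by
      intro i
      apply Int.toNat_of_nonneg
      have h1 := hI i
      by_cases hiT : i ∈ T
      · rw [if_pos hiT]; omega
      · rw [if_neg hiT]
        rcases eq_or_lt_of_le h1 with he | hl
        · exfalso
          exact hiT (hDT (Finset.mem_filter.2 ⟨Finset.mem_univ _, he.symm⟩))
        · omega
    have hcast : ((∑ i, (mext n I i + if i ∈ T then 1 else 0).toNat : ℕ) : ℤ) = (k : ℤ) := by
      rw [Nat.cast_sum]
      calc ∑ i, (((mext n I i + if i ∈ T then 1 else 0).toNat : ℤ))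
          = ∑ i, (mext n I i + (if i ∈ T then 1 else 0)) :=
            Finset.sum_congr rfl fun i _ => hcoe i
        _ = (∑ i, mext n I i) + ∑ i, (if i ∈ T then (1:ℤ) else 0) := Finset.sum_add_distrib
        _ = (k : ℤ) := by rw [sum_mext, zero_add, sum_boole_mem, hT]
    exact_mod_cast hcast
  · funext j
    show (((mext n I j.succ + if j.succ ∈ T then 1 else 0).toNat : ℤ))
        - (if j.succ ∈ T then 1 else 0) = I j
    have h1 := hI j.succ
    have h2 : mext n I j.succ = I j := mext_succ n I j
    by_cases hiT : j.succ ∈ T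
    · rw [if_pos hiT]
      omega
    · have h3 : mext n I j.succ ≠ -1 :=
        fun he => hiT (hDT (Finset.mem_filter.2 ⟨Finset.mem_univ _, he⟩))
      rw [if_neg hiT]
      omega

end Aux5

section Aux6

open ExteriorAlgebra

variable (n : ℕ)

/-- Generating wedges of weight `I` in degree `k`. -/
def genE (I : Fin n → ℤ) (k : ℕ) : Set (ExteriorAlgebra ℂ (Fin n → ℂ)) :=
  {x | ∃ T : Finset (Fin (n+1)), T.card = k ∧ deg1Set n I ⊆ T ∧ x = ωE n T}

lemma genset_eq (k : ℕ) :
    {x : MV n | ∃ (b : Fin (n+1) → ℕ) (T : Finset (Fin (n+1))),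
        T.card = k ∧ (∑ i, b i) = k ∧ x = AddMonoidAlgebra.single (Jw n b T) (ωE n T)}
      = ⋃ I ∈ Sk n k, (Lsi n I) '' genE n I k := by
  ext x
  simp only [Set.mem_iUnion, Set.mem_image, Set.mem_setOf_eq]
  constructor
  · rintro ⟨b, T, hT, hb, rfl⟩
    obtain ⟨h1, h2⟩ := genWeight_mem n b T k hb hT
    exact ⟨Jw n b T, Jw_mem_Sk n b T k hb hT, ωE n T, ⟨T, hT, h2, rfl⟩, rfl⟩
  · rintro ⟨I, hI, ω, ⟨T, hT, hDT, rfl⟩, rfl⟩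
    obtain ⟨b, hb, hJw⟩ := exists_b n I hI.1 T k hT hDT
    exact ⟨b, T, hT, hb, by rw [hJw]; rfl⟩

lemma span_genE (I : Fin n → ℤ) (k : ℕ) (hwt : wt n I ≤ k) :
    Submodule.span ℂ (genE n I k)
      = Submodule.span ℂ {EI n I} * Λ1 n ^ (k - wt n I) := by
  rw [EI_eq]
  exact span_ωE_eq n (deg1Set n I) k hwt

lemma H0_eq_iSup (k : ℕ) : H0 n k = ⨆ I ∈ Sk n k, VIk n I k := by
  rw [H0_eq_span, genset_eq, Submodule.span_iUnion₂]
  refine iSup_congr fun I => iSup_congr fun hI => ?_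
  rw [Submodule.span_image, span_genE n I k hI.2, VIk_eq]

/-- Projection onto the weight-`I` component. -/
def Pw (I : Fin n → ℤ) : MV n →ₗ[ℂ] MV n := (Lsi n I).comp ((Finsupp.lapply I).comp
    (AddMonoidAlgebra.coeffLinearEquiv ℂ : MV n ≃ₗ[ℂ] _).toLinearMap)

lemma Pw_single (I J : Fin n → ℤ) (ω : ExteriorAlgebra ℂ (Fin n → ℂ)) :
    Pw n I (AddMonoidAlgebra.single J ω) = if J = I then (AddMonoidAlgebra.single J ω : MV n) else 0 := by
  rw [Pw, LinearMap.comp_apply, LinearMap.comp_apply]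
  by_cases h : J = I
  · subst h
    rw [if_pos rfl]
    erw [Finsupp.lapply_apply]
    rw [LinearEquiv.coe_coe, AddMonoidAlgebra.coeffLinearEquiv_apply,
      AddMonoidAlgebra.coeff_single, Lsi_apply, Finsupp.single_eq_same]
  · rw [if_neg h]
    erw [Finsupp.lapply_apply]
    rw [LinearEquiv.coe_coe, AddMonoidAlgebra.coeffLinearEquiv_apply,
      AddMonoidAlgebra.coeff_single, Finsupp.single_eq_of_ne' h, Lsi_apply,
      AddMonoidAlgebra.single_zero]

lemma Pw_fix {I : Fin n → ℤ} {x : MV n} (hx : x ∈ LinearMap.range (Lsi n I)) :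
    Pw n I x = x := by
  obtain ⟨ω, rfl⟩ := hx
  rw [show Lsi n I ω = AddMonoidAlgebra.single I ω from rfl, Pw_single, if_pos rfl]

lemma map_Pw_H0_le (k : ℕ) (I : Fin n → ℤ) (hI : I ∈ Sk n k) :
    Submodule.map (Pw n I) (H0 n k) ≤ VIk n I k := by
  rw [H0_eq_span, Submodule.map_span, Submodule.span_le]
  rintro _ ⟨g, ⟨b, T, hT, hb, rfl⟩, rfl⟩
  rw [SetLike.mem_coe, Pw_single]
  by_cases h : Jw n b T = I
  · rw [if_pos h]
    have h2 : deg1Set n I ⊆ T := by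
      rw [← h]; exact (genWeight_mem n b T k hb hT).2
    rw [VIk_eq, h]
    apply Submodule.mem_map_of_mem
    rw [← span_genE n I k hI.2]
    exact Submodule.subset_span ⟨T, hT, h2, rfl⟩
  · rw [if_neg h]
    exact Submodule.zero_mem _

lemma map_Pw_H0_bot (k : ℕ) (I : Fin n → ℤ) (hI : I ∉ Sk n k) :
    Submodule.map (Pw n I) (H0 n k) ≤ ⊥ := by
  rw [H0_eq_span, Submodule.map_span, Submodule.span_le]
  rintro _ ⟨g, ⟨b, T, hT, hb, rfl⟩, rfl⟩
  rw [SetLike.mem_coe, Pw_single]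
  by_cases h : Jw n b T = I
  · exact absurd (h ▸ Jw_mem_Sk n b T k hb hT) hI
  · rw [if_neg h]
    exact Submodule.zero_mem _

lemma H0_inf_wsp (k : ℕ) (I : Fin n → ℤ) (hI : I ∈ Sk n k) :
    H0 n k ⊓ wsp n I = VIk n I k := by
  apply le_antisymm
  · rintro x ⟨hx1, hx2⟩
    rw [wsp_eq] at hx2
    rw [← Pw_fix n hx2]
    exact map_Pw_H0_le n k I hI (Submodule.mem_map_of_mem hx1)
  · apply le_inf
    · rw [H0_eq_iSup]
      exact le_iSup₂_of_le I hI le_rfl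
    · rw [wsp_eq, VIk_eq]
      exact LinearMap.map_le_range

lemma H0_inf_wsp_bot (k : ℕ) (I : Fin n → ℤ) (hI : I ∉ Sk n k) :
    H0 n k ⊓ wsp n I = ⊥ := by
  apply le_antisymm
  · rintro x ⟨hx1, hx2⟩
    rw [wsp_eq] at hx2
    rw [← Pw_fix n hx2]
    exact map_Pw_H0_bot n k I hI (Submodule.mem_map_of_mem hx1)
  · exact bot_le

lemma indep_single :
    iSupIndep (fun I : Fin n → ℤ => LinearMap.range (Lsi n I)) := by
  intro I
  rw [disjoint_iff_inf_le]
  rintro x ⟨hx1, hx2⟩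
  have hker : (⨆ J, ⨆ (_ : J ≠ I), LinearMap.range (Lsi n J))
      ≤ LinearMap.ker ((Finsupp.lapply (R := ℂ) I).comp
          (AddMonoidAlgebra.coeffLinearEquiv ℂ : MV n ≃ₗ[ℂ] _).toLinearMap) := by
    apply iSup₂_le
    intro J hJ
    rintro _ ⟨ω, rfl⟩
    rw [LinearMap.mem_ker, LinearMap.comp_apply]
    erw [Finsupp.lapply_apply]
    rw [LinearEquiv.coe_coe, AddMonoidAlgebra.coeffLinearEquiv_apply, Lsi_apply,
      AddMonoidAlgebra.coeff_single, Finsupp.single_eq_of_ne' hJ]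
  obtain ⟨ω, rfl⟩ := hx1
  have h2 := hker hx2
  rw [LinearMap.mem_ker, LinearMap.comp_apply] at h2
  erw [Finsupp.lapply_apply] at h2
  rw [LinearEquiv.coe_coe, AddMonoidAlgebra.coeffLinearEquiv_apply, Lsi_apply,
    AddMonoidAlgebra.coeff_single, Finsupp.single_eq_same] at h2
  rw [Submodule.mem_bot, Lsi_apply, h2, AddMonoidAlgebra.single_zero]

lemma indep_VIk (k : ℕ) :
    iSupIndep (fun I : (Sk n k) => VIk n (I : Fin n → ℤ) k) := by
  have h2 := (indep_single n).comp
    (Subtype.val_injective : Function.Injective ((↑) : (Sk n k) → (Fin n → ℤ)))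
  refine h2.mono fun I => ?_
  rw [VIk_eq]
  exact LinearMap.map_le_range

lemma VIk_ne_bot (k : ℕ) (hk : k ≤ n) (I : Fin n → ℤ) (hI : I ∈ Sk n k) :
    VIk n I k ≠ ⊥ := by
  obtain ⟨T, hDT, hTu, hTc⟩ := Finset.exists_subsuperset_card_eq
    (Finset.subset_univ (deg1Set n I)) (hI.2 : (deg1Set n I).card ≤ k)
    (by rw [Finset.card_univ, Fintype.card_fin]; omega)
  intro hbot
  have hmem : Lsi n I (ωE n T) ∈ VIk n I k := by
    rw [VIk_eq]
    apply Submodule.mem_map_of_mem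
    rw [← span_genE n I k hI.2]
    exact Submodule.subset_span ⟨T, hTc, hDT, rfl⟩
  rw [hbot, Submodule.mem_bot, Lsi_apply] at hmem
  exact ωE_ne_zero n (by rw [hTc]; exact hk) (AddMonoidAlgebra.single_eq_zero.1 hmem)

end Aux6
/-- The (ℂ*)ⁿ-representation on H⁰(ℂPⁿ, ∧ᵏ𝒯) induced by the torus
action has weight space decomposition H⁰(X, ∧ᵏ𝒯) = ⊕_{I ∈ S_k} V_I^k: the V_I^k span,
the family is independent, for I ∈ S_k the weight space of weight I is exactly V_I^k
(and it is nonzero, so S_k is exactly the set of weights), and for I ∉ S_k the weight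
space of weight I is zero. -/
theorem weight_decomposition_of_multivector_fields (n k : ℕ) (hk : k ≤ n) :
    H0 n k = (⨆ I ∈ Sk n k, VIk n I k) ∧
    iSupIndep (fun I : (Sk n k) => VIk n (I : Fin n → ℤ) k) ∧
    (∀ I ∈ Sk n k,
      H0 n k ⊓ (⨅ t : Fin n → ℂˣ, LinearMap.ker
          (act n t - (∏ j, (t j : ℂ) ^ (I j)) • (LinearMap.id : MV n →ₗ[ℂ] MV n)))
        = VIk n I k) ∧
    (∀ I ∈ Sk n k, VIk n I k ≠ ⊥) ∧
    (∀ I ∉ Sk n k,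
      H0 n k ⊓ (⨅ t : Fin n → ℂˣ, LinearMap.ker
          (act n t - (∏ j, (t j : ℂ) ^ (I j)) • (LinearMap.id : MV n →ₗ[ℂ] MV n)))
        = ⊥) := by
  exact ⟨H0_eq_iSup n k, indep_VIk n k, fun I hI => H0_inf_wsp n k I hI,
    fun I hI => VIk_ne_bot n k hk I hI, fun I hI => H0_inf_wsp_bot n k I hI⟩

end CPn
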